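/- Let G be a cubic graph with m edges and n vertices and let k ∈ {0,1}. If G has a cycle cover ℱ of length (4/3)m + k, then the set C of edges of weight 1 with respect to ℱ has exactly n − k edges and induces a subgraph in which every vertex has degree 0 or 2 (a disjoint union of cycles), and adding the cycles of C to the family ℱ yields a cycle double cover of G. -/

import Mathlib

open scoped Classical

namespace ShortCycleCovers

variable {V : Type*}

open Finset

section Aux

lemma multiset_sum_map_sum {α β : Type*} (m : Multiset α) (s : Finset β) (f : α → β → ℕ) :
    (m.map fun a => ∑ b ∈ s, f a b).sum = ∑ b ∈ s, (m.map fun a => f a b).sum := by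
  induction m using Multiset.induction_on with
  | empty => simp
  | cons a m ih => simp [ih, Finset.sum_add_distrib]

lemma even_multiset_sum (m : Multiset ℕ) (h : ∀ x ∈ m, Even x) : Even m.sum := by
  induction m using Multiset.induction_on with
  | empty => simp
  | cons a m ih =>
    rw [Multiset.sum_cons]
    exact (h a (Multiset.mem_cons_self a m)).add (ih fun x hx => h x (Multiset.mem_cons_of_mem hx))

lemma handshake [Fintype V] (G : SimpleGraph V) (f : Sym2 V → ℕ) :
    ∑ v : V, ∑ e ∈ G.edgeSet.toFinset.filter (fun e => v ∈ e), f e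
      = 2 * ∑ e ∈ G.edgeSet.toFinset, f e := by
  have h1 : ∀ v : V, ∑ e ∈ G.edgeSet.toFinset.filter (fun e => v ∈ e), f e
      = ∑ e ∈ G.edgeSet.toFinset, if v ∈ e then f e else 0 := fun v => by
    rw [Finset.sum_filter]
  simp only [h1]
  rw [Finset.sum_comm]
  rw [Finset.mul_sum]
  refine Finset.sum_congr rfl fun e he => ?_
  rw [Set.mem_toFinset] at he
  induction e with
  | _ a b =>
    have hab : a ≠ b := (G.mem_edgeSet.mp he).ne
    have : (Finset.univ.filter fun v => v ∈ s(a, b)) = {a, b} := by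
      ext v; simp [Sym2.mem_iff]
    rw [← Finset.sum_filter, this, Finset.sum_pair hab, two_mul]

lemma card_incidence_eq_ncard_neighborSet [Fintype V] (G : SimpleGraph V) (C : G.Subgraph)
    (v : V) :
    (G.edgeSet.toFinset.filter fun e => v ∈ e ∧ e ∈ C.edgeSet).card
      = (C.neighborSet v).ncard := by
  rw [Set.ncard_eq_toFinset_card']
  have himg : (G.edgeSet.toFinset.filter fun e => v ∈ e ∧ e ∈ C.edgeSet)
      = (C.neighborSet v).toFinset.image (fun u => s(v, u)) := by
    ext e
    simp only [Finset.mem_filter, Set.mem_toFinset, Finset.mem_image,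
      SimpleGraph.Subgraph.mem_neighborSet]
    constructor
    · rintro ⟨_, hv, hC⟩
      induction e with
      | _ a b =>
        rcases Sym2.mem_iff.mp hv with rfl | rfl
        · exact ⟨b, SimpleGraph.Subgraph.mem_edgeSet.mp hC, rfl⟩
        · exact ⟨a, (SimpleGraph.Subgraph.mem_edgeSet.mp hC).symm, Sym2.eq_swap⟩
    · rintro ⟨u, hu, rfl⟩
      exact ⟨G.mem_edgeSet.mpr (C.adj_sub hu), Sym2.mem_mk_left v u,
        SimpleGraph.Subgraph.mem_edgeSet.mpr hu⟩
  rw [himg]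
  exact Finset.card_image_of_injective _ fun a b h => (Sym2.congr_right).mp h

variable {G G' : SimpleGraph V} (hle : G' ≤ G)

/-- The subgraph of `G` induced by a connected component of `G' ≤ G`. -/
noncomputable def compSub (c : G'.ConnectedComponent) : G.Subgraph :=
  (SimpleGraph.toSubgraph G' hle).induce c.supp

lemma compSub_verts (c : G'.ConnectedComponent) : (compSub hle c).verts = c.supp := rfl

lemma compSub_adj {c : G'.ConnectedComponent} {u v : V} :
    (compSub hle c).Adj u v ↔ u ∈ c.supp ∧ v ∈ c.supp ∧ G'.Adj u v := Iff.rfl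

lemma mem_supp_of_adj {c : G'.ConnectedComponent} {u v : V} (h : G'.Adj u v)
    (hu : u ∈ c.supp) : v ∈ c.supp := by
  rw [SimpleGraph.ConnectedComponent.mem_supp_iff] at hu ⊢
  rw [← hu]
  exact (SimpleGraph.ConnectedComponent.eq).mpr h.symm.reachable

lemma compSub_adj' {c : G'.ConnectedComponent} {u v : V} :
    (compSub hle c).Adj u v ↔ G'.Adj u v ∧ u ∈ c.supp := by
  rw [compSub_adj]
  exact ⟨fun ⟨h1, _, h3⟩ => ⟨h3, h1⟩, fun ⟨h, hu⟩ => ⟨hu, mem_supp_of_adj h hu, h⟩⟩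

lemma compSub_neighborSet {c : G'.ConnectedComponent} {v : V} (hv : v ∈ c.supp) :
    (compSub hle c).neighborSet v = G'.neighborSet v := by
  ext u
  simp only [SimpleGraph.Subgraph.mem_neighborSet, SimpleGraph.mem_neighborSet, compSub_adj]
  exact ⟨fun ⟨_, _, h⟩ => h, fun h => ⟨hv, mem_supp_of_adj h hv, h⟩⟩

lemma compSub_reachable {c : G'.ConnectedComponent} {x y : V} (p : G'.Walk x y)
    (hx : x ∈ c.supp) (hy : y ∈ c.supp) :
    (compSub hle c).coe.Reachable ⟨x, hx⟩ ⟨y, hy⟩ := by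
  induction p with
  | nil => exact SimpleGraph.Reachable.refl _
  | @cons a b d h q ih =>
    have hb : b ∈ c.supp := mem_supp_of_adj h hx
    have hadj : (compSub hle c).coe.Adj ⟨a, hx⟩ ⟨b, hb⟩ := by
      exact (compSub_adj hle).mpr ⟨hx, hb, h⟩
    exact (hadj.reachable).trans (ih hb hy)

lemma compSub_connected (c : G'.ConnectedComponent) : (compSub hle c).Connected := by
  rw [SimpleGraph.Subgraph.connected_iff]
  constructor
  · rw [SimpleGraph.Subgraph.preconnected_iff]
    rintro ⟨u, hu⟩ ⟨v, hv⟩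
    have hu' := hu; have hv' := hv
    rw [compSub_verts, SimpleGraph.ConnectedComponent.mem_supp_iff] at hu' hv'
    have hr : G'.Reachable u v := (SimpleGraph.ConnectedComponent.eq).mp (hu'.trans hv'.symm)
    exact (compSub_reachable hle hr.some hu hv)
  · obtain ⟨v, hv⟩ := c.exists_rep
    exact ⟨v, by rw [compSub_verts, SimpleGraph.ConnectedComponent.mem_supp_iff]; exact hv⟩

lemma compSub_mem_edgeSet {c : G'.ConnectedComponent} {a b : V} :
    s(a, b) ∈ (compSub hle c).edgeSet ↔ G'.Adj a b ∧ a ∈ c.supp := by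
  rw [SimpleGraph.Subgraph.mem_edgeSet, compSub_adj']

end Aux

/-- A cycle in `G`: a connected 2-regular subgraph. -/
def IsCycleSub {G : SimpleGraph V} (C : G.Subgraph) : Prop :=
  C.Connected ∧ ∀ v ∈ C.verts, (C.neighborSet v).ncard = 2

/-- A cycle cover of `G`: a family of cycles covering every edge at least once. -/
def IsCycleCover (G : SimpleGraph V) (𝒞 : Multiset G.Subgraph) : Prop :=
  (∀ C ∈ 𝒞, IsCycleSub C) ∧ ∀ e ∈ G.edgeSet, ∃ C ∈ 𝒞, e ∈ C.edgeSet

/-- The length of a family of cycles: the sum of the numbers of edges of its members. -/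
noncomputable def coverLength {G : SimpleGraph V} (𝒞 : Multiset G.Subgraph) : ℕ :=
  (𝒞.map fun C => C.edgeSet.ncard).sum

/-- The weight of an edge w.r.t. a family of cycles: the number of members containing it. -/
noncomputable def edgeWeight {G : SimpleGraph V} (𝒞 : Multiset G.Subgraph) (e : Sym2 V) : ℕ :=
  (𝒞.map fun C => if e ∈ C.edgeSet then 1 else 0).sum

/-- A cycle double cover: a family of cycles covering every edge exactly twice. -/
def IsCDC (G : SimpleGraph V) (𝒞 : Multiset G.Subgraph) : Prop :=
  (∀ C ∈ 𝒞, IsCycleSub C) ∧ ∀ e ∈ G.edgeSet, edgeWeight 𝒞 e = 2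

/-- The length of a shortest cycle cover of `G`. -/
noncomputable def scc (G : SimpleGraph V) : ℕ :=
  sInf {L : ℕ | ∃ 𝒞 : Multiset G.Subgraph, IsCycleCover G 𝒞 ∧ coverLength 𝒞 = L}

/-- A cubic graph: every vertex has degree 3. -/
def IsCubic (G : SimpleGraph V) : Prop := ∀ v : V, (G.neighborSet v).ncard = 3

/-- A bridgeless graph: no cut edge. -/
def Bridgeless (G : SimpleGraph V) : Prop := ∀ e ∈ G.edgeSet, ¬ G.IsBridge e

/-- If a cubic graph has a cycle cover `ℱ` of length `(4/3)m + k`, `k ∈ {0,1}`, then the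
set of edges of weight 1 has `n - k` edges, induces a subgraph in which every vertex has
degree 0 or 2, and adding its cycles to `ℱ` yields a cycle double cover of `G`. -/
theorem statement2 [Fintype V] (G : SimpleGraph V) (hcubic : IsCubic G)
    (k : ℕ) (hk : k = 0 ∨ k = 1)
    (ℱ : Multiset G.Subgraph) (hcover : IsCycleCover G ℱ)
    (hlen : 3 * coverLength ℱ = 4 * G.edgeSet.ncard + 3 * k) :
    ({e ∈ G.edgeSet | edgeWeight ℱ e = 1}).ncard = Fintype.card V - k ∧
    (∀ v : V, ({e ∈ G.edgeSet | edgeWeight ℱ e = 1 ∧ v ∈ e}).ncard = 0 ∨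
      ({e ∈ G.edgeSet | edgeWeight ℱ e = 1 ∧ v ∈ e}).ncard = 2) ∧
    ∃ 𝒟 : Multiset G.Subgraph,
      (∀ D ∈ 𝒟, IsCycleSub D) ∧
      (∀ D₁ ∈ 𝒟, ∀ D₂ ∈ 𝒟, D₁ = D₂ ∨ Disjoint D₁.verts D₂.verts) ∧
      (∀ e : Sym2 V, (e ∈ G.edgeSet ∧ edgeWeight ℱ e = 1) ↔ ∃ D ∈ 𝒟, e ∈ D.edgeSet) ∧
      IsCDC G (ℱ + 𝒟) := by
  set E : Finset (Sym2 V) := G.edgeSet.toFinset with hE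
  set n : ℕ := Fintype.card V with hn
  -- weights are at least 1
  have hw1 : ∀ e ∈ E, 1 ≤ edgeWeight ℱ e := by
    intro e he
    rw [hE, Set.mem_toFinset] at he
    obtain ⟨C, hC, heC⟩ := hcover.2 e he
    have h1 : (1 : ℕ) ∈ ℱ.map (fun C => if e ∈ C.edgeSet then 1 else 0) := by
      have := Multiset.mem_map_of_mem (fun C : G.Subgraph => if e ∈ C.edgeSet then 1 else 0) hC
      simp only [if_pos heC] at this
      exact this
    exact Multiset.single_le_sum (fun x _ => Nat.zero_le x) 1 h1
  -- coverLength as a sum of weights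
  have hncard : ∀ C : G.Subgraph, C.edgeSet.ncard = ∑ e ∈ E, if e ∈ C.edgeSet then 1 else 0 := by
    intro C
    rw [← Finset.card_filter]
    have hfil : E.filter (fun e => e ∈ C.edgeSet) = C.edgeSet.toFinset := by
      ext e
      simp only [Finset.mem_filter, Set.mem_toFinset, hE]
      exact ⟨fun h => h.2, fun h => ⟨C.edgeSet_subset h, h⟩⟩
    rw [hfil, Set.ncard_eq_toFinset_card']
  have hlen' : coverLength ℱ = ∑ e ∈ E, edgeWeight ℱ e := by
    unfold coverLength edgeWeight
    calc (ℱ.map fun C => C.edgeSet.ncard).sum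
        = (ℱ.map fun C => ∑ e ∈ E, if e ∈ C.edgeSet then 1 else 0).sum := by
          congr 1; exact Multiset.map_congr rfl fun C _ => hncard C
      _ = ∑ e ∈ E, (ℱ.map fun C => if e ∈ C.edgeSet then 1 else 0).sum :=
          multiset_sum_map_sum ℱ E _
  -- incident edge count is 3
  have hcard3 : ∀ v : V, (E.filter (fun e => v ∈ e)).card = 3 := by
    intro v
    have h1 := card_incidence_eq_ncard_neighborSet G ⊤ v
    have h2 : (E.filter fun e => v ∈ e ∧ e ∈ (⊤ : G.Subgraph).edgeSet)
        = E.filter (fun e => v ∈ e) := by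
      refine Finset.filter_congr fun e he => ?_
      rw [hE, Set.mem_toFinset] at he
      simp [SimpleGraph.Subgraph.edgeSet_top, he]
    rw [hE] at h2 ⊢
    rw [h2] at h1
    rw [h1, SimpleGraph.Subgraph.neighborSet_top]
    exact hcubic v
  -- per-subgraph incident count lemma
  have hCinc : ∀ C ∈ ℱ, ∀ v : V,
      (E.filter (fun e => v ∈ e ∧ e ∈ C.edgeSet)).card = 0 ∨
      (E.filter (fun e => v ∈ e ∧ e ∈ C.edgeSet)).card = 2 := by
    intro C hC v
    have h1 := card_incidence_eq_ncard_neighborSet G C v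
    rw [hE, h1]
    by_cases hv : v ∈ C.verts
    · exact Or.inr ((hcover.1 C hC).2 v hv)
    · left
      have : C.neighborSet v = ∅ := by
        ext u
        simp only [SimpleGraph.Subgraph.mem_neighborSet, Set.mem_empty_iff_false, iff_false]
        exact fun h => hv (C.edge_vert h)
      rw [this, Set.ncard_empty]
  -- vertex weight sums
  have hEven : ∀ v : V, Even (∑ e ∈ E.filter (fun e => v ∈ e), edgeWeight ℱ e) := by
    intro v
    unfold edgeWeight
    rw [← multiset_sum_map_sum]
    refine even_multiset_sum _ ?_
    intro x hx
    obtain ⟨C, hC, rfl⟩ := Multiset.mem_map.mp hx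
    have : ∑ e ∈ E.filter (fun e => v ∈ e), (if e ∈ C.edgeSet then 1 else 0)
        = (E.filter (fun e => v ∈ e ∧ e ∈ C.edgeSet)).card := by
      rw [← Finset.card_filter, Finset.filter_filter]
    rw [this]
    rcases hCinc C hC v with h | h <;> rw [h] <;> decide
  have hsv4 : ∀ v : V, 4 ≤ ∑ e ∈ E.filter (fun e => v ∈ e), edgeWeight ℱ e := by
    intro v
    have h3 : 3 ≤ ∑ e ∈ E.filter (fun e => v ∈ e), edgeWeight ℱ e := by
      have := Finset.card_nsmul_le_sum (E.filter (fun e => v ∈ e)) (edgeWeight ℱ) 1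
        (fun e he => hw1 e (Finset.mem_filter.mp he).1)
      rw [hcard3 v] at this
      simpa using this
    obtain ⟨t, ht⟩ := hEven v
    omega
  have hm : G.edgeSet.ncard = E.card := by rw [hE, Set.ncard_eq_toFinset_card']
  have h2m3n : 2 * E.card = 3 * n := by
    have hhs1 := handshake G (fun _ => 1)
    simp only [Finset.sum_const, smul_eq_mul, mul_one] at hhs1
    rw [← hE] at hhs1
    have : ∀ v : V, (E.filter (fun e => v ∈ e)).card = 3 := hcard3
    rw [Finset.sum_congr rfl (fun v _ => this v)] at hhs1
    simp only [Finset.sum_const, smul_eq_mul, mul_one, Finset.card_univ, ← hn] at hhs1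
    omega
  have hsum2 : ∑ v : V, ∑ e ∈ E.filter (fun e => v ∈ e), edgeWeight ℱ e = 4 * n + 2 * k := by
    have hhs := handshake G (edgeWeight ℱ)
    rw [← hE] at hhs
    rw [hlen', hm] at hlen
    omega
  -- total excess over 4 per vertex is 2k
  have hexc : ∑ v : V, (∑ e ∈ E.filter (fun e => v ∈ e), edgeWeight ℱ e - 4) = 2 * k := by
    have h1 : ∑ v : V, ∑ e ∈ E.filter (fun e => v ∈ e), edgeWeight ℱ e
        = ∑ v : V, ((∑ e ∈ E.filter (fun e => v ∈ e), edgeWeight ℱ e - 4) + 4) :=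
      Finset.sum_congr rfl fun v _ => (Nat.sub_add_cancel (hsv4 v)).symm
    rw [hsum2] at h1
    rw [Finset.sum_add_distrib, Finset.sum_const, Finset.card_univ, ← hn, smul_eq_mul] at h1
    omega
  -- every edge has weight at most 2
  have hw2 : ∀ e ∈ E, edgeWeight ℱ e ≤ 2 := by
    intro e he
    by_contra hcon
    push_neg at hcon
    induction e with
    | _ a b =>
      have hab : a ≠ b := by
        have : s(a, b) ∈ G.edgeSet := by rwa [hE, Set.mem_toFinset] at he
        exact (G.mem_edgeSet.mp this).ne
      have key : ∀ v, v ∈ s(a, b) → 5 ≤ ∑ e ∈ E.filter (fun e => v ∈ e), edgeWeight ℱ e := by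
        intro v hv
        have hmem : s(a, b) ∈ E.filter (fun e => v ∈ e) := Finset.mem_filter.mpr ⟨he, hv⟩
        have hsum := Finset.add_sum_erase _ (edgeWeight ℱ) hmem
        have hcarde : ((E.filter (fun e => v ∈ e)).erase s(a, b)).card = 2 := by
          rw [Finset.card_erase_of_mem hmem, hcard3 v]
        have h2 : 2 ≤ ∑ e ∈ (E.filter (fun e => v ∈ e)).erase s(a, b), edgeWeight ℱ e := by
          have := Finset.card_nsmul_le_sum ((E.filter (fun e => v ∈ e)).erase s(a, b))
            (edgeWeight ℱ) 1
            (fun e he' => hw1 e (Finset.mem_filter.mp (Finset.mem_of_mem_erase he')).1)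
          rw [hcarde] at this
          simpa using this
        omega
      have ha5 := key a (Sym2.mem_mk_left a b)
      have hb5 := key b (Sym2.mem_mk_right a b)
      obtain ⟨ta, hta⟩ := hEven a
      obtain ⟨tb, htb⟩ := hEven b
      have hle2 : ∑ v ∈ ({a, b} : Finset V),
          (∑ e ∈ E.filter (fun e => v ∈ e), edgeWeight ℱ e - 4)
          ≤ ∑ v : V, (∑ e ∈ E.filter (fun e => v ∈ e), edgeWeight ℱ e - 4) :=
        Finset.sum_le_sum_of_subset (Finset.subset_univ _)
      rw [Finset.sum_pair hab, hexc] at hle2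
      omega
  -- classification of vertices
  have hclass : ∀ v : V,
      ((E.filter (fun e => v ∈ e ∧ edgeWeight ℱ e = 1)).card = 2 ∧
        ∑ e ∈ E.filter (fun e => v ∈ e), edgeWeight ℱ e = 4) ∨
      ((E.filter (fun e => v ∈ e ∧ edgeWeight ℱ e = 1)).card = 0 ∧
        ∑ e ∈ E.filter (fun e => v ∈ e), edgeWeight ℱ e = 6) := by
    intro v
    have hsplit := Finset.card_filter_add_card_filter_not
      (s := E.filter (fun e => v ∈ e)) (p := fun e => edgeWeight ℱ e = 1)
    have htot := Finset.sum_filter_add_sum_filter_not (E.filter (fun e => v ∈ e))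
      (fun e => edgeWeight ℱ e = 1) (edgeWeight ℱ)
    have hs1 : ∑ e ∈ (E.filter (fun e => v ∈ e)).filter (fun e => edgeWeight ℱ e = 1),
        edgeWeight ℱ e
        = ((E.filter (fun e => v ∈ e)).filter (fun e => edgeWeight ℱ e = 1)).card := by
      rw [Finset.sum_congr rfl (fun e he => (Finset.mem_filter.mp he).2)]
      simp
    have hs2 : ∑ e ∈ (E.filter (fun e => v ∈ e)).filter (fun e => ¬ edgeWeight ℱ e = 1),
        edgeWeight ℱ e
        = 2 * ((E.filter (fun e => v ∈ e)).filter (fun e => ¬ edgeWeight ℱ e = 1)).card := by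
      have h2 : ∀ e ∈ (E.filter (fun e => v ∈ e)).filter (fun e => ¬ edgeWeight ℱ e = 1),
          edgeWeight ℱ e = 2 := by
        intro e he
        have he' := Finset.mem_filter.mp he
        have heE := (Finset.mem_filter.mp he'.1).1
        have := hw1 e heE
        have := hw2 e heE
        omega
      rw [Finset.sum_congr rfl h2]
      simp [mul_comm]
    have hfe : (E.filter (fun e => v ∈ e)).filter (fun e => edgeWeight ℱ e = 1)
        = E.filter (fun e => v ∈ e ∧ edgeWeight ℱ e = 1) := by
      rw [Finset.filter_filter]
    rw [hfe] at hsplit hs1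
    rw [hfe, hs1, hs2] at htot
    have h4 := hsv4 v
    obtain ⟨t, ht⟩ := hEven v
    rw [hcard3 v] at hsplit
    omega
  -- k ≤ n
  have hkn : k ≤ n := by
    rcases hk with rfl | rfl
    · omega
    · by_contra hcon
      have hn0 : (Finset.univ : Finset V) = ∅ :=
        Finset.card_eq_zero.mp (by rw [Finset.card_univ, ← hn]; omega)
      rw [hn0, Finset.sum_empty] at hexc
      omega
  -- number of weight-1 edges
  have hcount1 : (E.filter (fun e => edgeWeight ℱ e = 1)).card = n - k := by
    have hhs := handshake G (fun e => if edgeWeight ℱ e = 1 then 1 else 0)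
    rw [← hE] at hhs
    have hL : ∀ v : V, ∑ e ∈ E.filter (fun e => v ∈ e),
        (if edgeWeight ℱ e = 1 then 1 else 0)
        = (E.filter (fun e => v ∈ e ∧ edgeWeight ℱ e = 1)).card := by
      intro v; rw [← Finset.card_filter, Finset.filter_filter]
    rw [Finset.sum_congr rfl (fun v _ => hL v), ← Finset.card_filter] at hhs
    have hdv : ∀ v : V, (E.filter (fun e => v ∈ e ∧ edgeWeight ℱ e = 1)).card
        + (∑ e ∈ E.filter (fun e => v ∈ e), edgeWeight ℱ e - 4) = 2 := by
      intro v; rcases hclass v with ⟨h1, h2⟩ | ⟨h1, h2⟩ <;> rw [h1, h2]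
    have hsumd := Finset.sum_congr rfl (fun v (_ : v ∈ Finset.univ) => hdv v)
    rw [Finset.sum_add_distrib, hexc, Finset.sum_const, Finset.card_univ, ← hn,
      smul_eq_mul] at hsumd
    omega
  have hset1 : ({e ∈ G.edgeSet | edgeWeight ℱ e = 1} : Set (Sym2 V)).ncard
      = (E.filter (fun e => edgeWeight ℱ e = 1)).card := by
    rw [Set.ncard_eq_toFinset_card']
    congr 1
    ext e
    simp [hE, Set.mem_toFinset]
  have hset2 : ∀ v : V, ({e ∈ G.edgeSet | edgeWeight ℱ e = 1 ∧ v ∈ e} : Set (Sym2 V)).ncard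
      = (E.filter (fun e => v ∈ e ∧ edgeWeight ℱ e = 1)).card := by
    intro v
    rw [Set.ncard_eq_toFinset_card']
    congr 1
    ext e
    simp only [Set.mem_toFinset, Set.mem_setOf_eq, Finset.mem_filter, hE]
    tauto
  refine ⟨by rw [hset1, hcount1], fun v => by
    rw [hset2 v]
    rcases hclass v with ⟨h1, _⟩ | ⟨h1, _⟩
    · exact Or.inr h1
    · exact Or.inl h1, ?_⟩
  -- the graph of weight-1 edges
  let G' : SimpleGraph V :=
    { Adj := fun a b => G.Adj a b ∧ edgeWeight ℱ (s(a, b)) = 1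
      symm := by
        constructor
        intro a b h
        exact ⟨h.1.symm, by rw [← Sym2.eq_swap]; exact h.2⟩
      loopless := ⟨fun a h => G.loopless.irrefl a h.1⟩ }
  have hle : G' ≤ G := fun _ _ h => h.1
  have hsubnb : ∀ v : V, (SimpleGraph.toSubgraph G' hle).neighborSet v = G'.neighborSet v :=
    fun v => rfl
  have hsubedge : ∀ e ∈ E, (e ∈ (SimpleGraph.toSubgraph G' hle).edgeSet
      ↔ edgeWeight ℱ e = 1) := by
    intro e he
    rw [hE, Set.mem_toFinset] at he
    induction e with
    | _ a b =>
      rw [SimpleGraph.Subgraph.mem_edgeSet]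
      exact ⟨fun h => h.2, fun h => ⟨G.mem_edgeSet.mp he, h⟩⟩
  have hG'deg : ∀ v : V, (G'.neighborSet v).ncard
      = (E.filter (fun e => v ∈ e ∧ edgeWeight ℱ e = 1)).card := by
    intro v
    have h1 := card_incidence_eq_ncard_neighborSet G (SimpleGraph.toSubgraph G' hle) v
    rw [hsubnb] at h1
    rw [← h1, ← hE]
    refine congrArg Finset.card (Finset.filter_congr fun e he => ?_)
    rw [hsubedge e he]
  have hdeg01 : ∀ v : V, (G'.neighborSet v).ncard = 0 ∨ (G'.neighborSet v).ncard = 2 := by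
    intro v
    rw [hG'deg v]
    rcases hclass v with ⟨h1, _⟩ | ⟨h1, _⟩
    · exact Or.inr h1
    · exact Or.inl h1
  have hfin : Fintype G'.ConnectedComponent := Fintype.ofFinite _
  let S : Finset G'.ConnectedComponent :=
    Finset.univ.filter (fun c => ∃ v ∈ c.supp, (G'.neighborSet v).ncard = 2)
  let 𝒟 : Multiset G.Subgraph := S.val.map (compSub hle)
  -- all vertices in a component of S have degree 2
  have hsupdeg : ∀ c ∈ S, ∀ v ∈ c.supp, (G'.neighborSet v).ncard = 2 := by
    intro c hc v hv
    obtain ⟨u, hu, hu2⟩ := (Finset.mem_filter.mp hc).2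
    rcases hdeg01 v with h0 | h2
    · exfalso
      have hvu : v ≠ u := by
        intro h
        rw [h, hu2] at h0
        omega
      have hempty : G'.neighborSet v = ∅ :=
        (Set.ncard_eq_zero (Set.toFinite _)).mp h0
      rw [SimpleGraph.ConnectedComponent.mem_supp_iff] at hv hu
      have hr : G'.Reachable v u := SimpleGraph.ConnectedComponent.eq.mp (hv.trans hu.symm)
      obtain ⟨p⟩ := hr
      cases p with
      | nil => exact hvu rfl
      | cons h q =>
        have : _ ∈ G'.neighborSet v := h
        rw [hempty] at this
        exact this
    · exact h2
  -- cycles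
  have hcyc : ∀ D ∈ 𝒟, IsCycleSub D := by
    intro D hD
    obtain ⟨c, hc, rfl⟩ := Multiset.mem_map.mp hD
    rw [Finset.mem_val] at hc
    refine ⟨compSub_connected hle c, fun v hv => ?_⟩
    rw [compSub_verts] at hv
    rw [compSub_neighborSet hle hv]
    exact hsupdeg c hc v hv
  -- disjointness
  have hdisj : ∀ D₁ ∈ 𝒟, ∀ D₂ ∈ 𝒟, D₁ = D₂ ∨ Disjoint D₁.verts D₂.verts := by
    intro D₁ hD₁ D₂ hD₂
    obtain ⟨c₁, _, rfl⟩ := Multiset.mem_map.mp hD₁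
    obtain ⟨c₂, _, rfl⟩ := Multiset.mem_map.mp hD₂
    by_cases h : c₁ = c₂
    · exact Or.inl (by rw [h])
    · right
      rw [compSub_verts, compSub_verts]
      exact SimpleGraph.pairwise_disjoint_supp_connectedComponent G' h
  -- edge characterization
  have hedgechar : ∀ e : Sym2 V,
      (e ∈ G.edgeSet ∧ edgeWeight ℱ e = 1) ↔ ∃ D ∈ 𝒟, e ∈ D.edgeSet := by
    intro e
    induction e with
    | _ a b =>
      constructor
      · rintro ⟨he, hwe⟩
        have hadj : G'.Adj a b := ⟨G.mem_edgeSet.mp he, hwe⟩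
        have ha : a ∈ (G'.connectedComponentMk a).supp := by
          rw [SimpleGraph.ConnectedComponent.mem_supp_iff]
        have hdeg2 : (G'.neighborSet a).ncard = 2 := by
          rcases hdeg01 a with h0 | h2
          · exfalso
            have hempty : G'.neighborSet a = ∅ :=
              (Set.ncard_eq_zero (Set.toFinite _)).mp h0
            have : b ∈ G'.neighborSet a := hadj
            rw [hempty] at this
            exact this
          · exact h2
        have hcS : G'.connectedComponentMk a ∈ S :=
          Finset.mem_filter.mpr ⟨Finset.mem_univ _, a, ha, hdeg2⟩
        refine ⟨compSub hle (G'.connectedComponentMk a),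
          Multiset.mem_map.mpr ⟨_, Finset.mem_val.mpr hcS, rfl⟩, ?_⟩
        exact (compSub_mem_edgeSet hle).mpr ⟨hadj, ha⟩
      · rintro ⟨D, hD, heD⟩
        obtain ⟨c, _, rfl⟩ := Multiset.mem_map.mp hD
        have h := (compSub_mem_edgeSet hle).mp heD
        exact ⟨G.mem_edgeSet.mpr h.1.1, h.1.2⟩
  -- the CDC
  refine ⟨𝒟, hcyc, hdisj, hedgechar, ?_, ?_⟩
  · intro C hC
    rcases Multiset.mem_add.mp hC with h | h
    · exact hcover.1 C h
    · exact hcyc C h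
  · intro e he
    have heE : e ∈ E := by rw [hE, Set.mem_toFinset]; exact he
    have hsplitW : edgeWeight (ℱ + 𝒟) e = edgeWeight ℱ e + edgeWeight 𝒟 e := by
      unfold edgeWeight
      rw [Multiset.map_add, Multiset.sum_add]
    have hDsum : edgeWeight 𝒟 e
        = ∑ c ∈ S, (if e ∈ (compSub hle c).edgeSet then 1 else 0) := by
      unfold edgeWeight
      rw [Finset.sum_eq_multiset_sum]
      simp only [𝒟, Multiset.map_map, Function.comp]
    induction e with
    | _ a b =>
      have hw12 : edgeWeight ℱ s(a, b) = 1 ∨ edgeWeight ℱ s(a, b) = 2 := by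
        have := hw1 _ heE
        have := hw2 _ heE
        omega
      rcases hw12 with hwe | hwe
      · -- weight 1 : exactly one D contains e
        have hadj : G'.Adj a b := ⟨G.mem_edgeSet.mp he, hwe⟩
        have hiff : ∀ c : G'.ConnectedComponent,
            (s(a, b) ∈ (compSub hle c).edgeSet ↔ c = G'.connectedComponentMk a) := by
          intro c
          rw [compSub_mem_edgeSet hle]
          constructor
          · rintro ⟨_, ha⟩
            rw [SimpleGraph.ConnectedComponent.mem_supp_iff] at ha
            exact ha.symm
          · rintro rfl
            exact ⟨hadj, by rw [SimpleGraph.ConnectedComponent.mem_supp_iff]⟩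
        have hDW : edgeWeight 𝒟 s(a, b) = 1 := by
          rw [hDsum]
          rw [Finset.sum_congr rfl (fun c _ => if_congr (hiff c) rfl rfl)]
          rw [Finset.sum_ite_eq' S (G'.connectedComponentMk a) (fun _ => 1)]
          have ha : a ∈ (G'.connectedComponentMk a).supp := by
            rw [SimpleGraph.ConnectedComponent.mem_supp_iff]
          have hdeg2 : (G'.neighborSet a).ncard = 2 := by
            rcases hdeg01 a with h0 | h2
            · exfalso
              have hempty : G'.neighborSet a = ∅ :=
                (Set.ncard_eq_zero (Set.toFinite _)).mp h0
              have : b ∈ G'.neighborSet a := hadj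
              rw [hempty] at this
              exact this
            · exact h2
          rw [if_pos (Finset.mem_filter.mpr ⟨Finset.mem_univ _, a, ha, hdeg2⟩)]
        rw [hsplitW, hwe, hDW]
      · -- weight 2 : no D contains e
        have hDW : edgeWeight 𝒟 s(a, b) = 0 := by
          rw [hDsum]
          refine Finset.sum_eq_zero fun c _ => ?_
          rw [if_neg]
          intro hmem
          have h := (compSub_mem_edgeSet hle).mp hmem
          have : edgeWeight ℱ s(a, b) = 1 := h.1.2
          omega
        rw [hsplitW, hwe, hDW]


end ShortCycleCovers
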